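/- arXiv:1809.08047 — 2 statements merged into one kernel-verified Lean document; each statement's English description precedes it below -/
import Mathlib

section
/- For a finite topological space X, the assignment sending a sheaf of abelian groups F on X to the abelian data p ↦ F(U_p) (with transition map F(U_p) → F(U_q) for p ≤ q given by restriction along the inclusion U_q ⊆ U_p) is an equivalence of categories between the category of sheaves of abelian groups on X and the category of abelian data on X. -/
open CategoryTheory Topology CategoryTheory.Limits TopologicalSpace

abbrev AbData (X : Type) [TopologicalSpace X] : Type 1 := Specialization X ⥤ AddCommGrpCat.{0}
abbrev pt {X : Type} [TopologicalSpace X] (x : X) : Specialization X := Specialization.toEquiv x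

section spaces
variable {X : Type} [TopologicalSpace X]

/-- The minimal open subset containing a point (of a finite space). -/
def minOpen (x : X) : Set X := ⋂₀ {U : Set X | IsOpen U ∧ x ∈ U}

lemma isOpen_minOpen [Finite X] (x : X) : IsOpen (minOpen x) :=
  Set.Finite.isOpen_sInter (Set.toFinite _) (fun _ hU => hU.1)

lemma mem_minOpen_iff {x z : X} : z ∈ minOpen x ↔ pt x ≤ pt z := by
  rw [Specialization.toEquiv_le_toEquiv, specializes_iff_forall_open]
  constructor
  · intro hz s hs hx
    exact hz s ⟨hs, hx⟩
  · intro h U hU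
    exact h U hU.1 hU.2

lemma minOpen_anti {y y' : X} (h : pt y ≤ pt y') : minOpen y' ⊆ minOpen y := by
  intro z hz
  rw [mem_minOpen_iff] at hz ⊢
  exact le_trans h hz
end spaces

section sheaves
variable (X : TopCat.{0}) [Finite ↑X]

/-- The minimal open subset `U_p` containing a point, as an object of `Opens X`. -/
noncomputable def Umin (p : ↑X) : Opens ↑X := ⟨minOpen p, isOpen_minOpen p⟩

lemma Umin_anti {p q : ↑X} (h : pt p ≤ pt q) : Umin X q ≤ Umin X p :=
  minOpen_anti h

/-- The functor sending a sheaf of abelian groups `F` on a finite topological space `X` to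
the abelian data `p ↦ F(U_p)`, with transition maps given by restriction. -/
noncomputable def sheafToData : TopCat.Sheaf AddCommGrpCat.{0} X ⥤ AbData ↑X where
  obj F :=
    { obj := fun p => F.val.obj (Opposite.op (Umin X (Specialization.ofEquiv p)))
      map := fun {p q} h => F.val.map (homOfLE (Umin_anti X (leOfHom h))).op
      map_id := fun p => by
        show F.val.map (homOfLE (Umin_anti X (leOfHom (𝟙 p)))).op = 𝟙 _
        rw [show (homOfLE (Umin_anti X (leOfHom (𝟙 p)))) = 𝟙 _ from Subsingleton.elim _ _,
          op_id, F.val.map_id]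
      map_comp := fun {p q r} h1 h2 => by
        show F.val.map (homOfLE (Umin_anti X (leOfHom (h1 ≫ h2)))).op
          = F.val.map (homOfLE (Umin_anti X (leOfHom h1))).op
            ≫ F.val.map (homOfLE (Umin_anti X (leOfHom h2))).op
        rw [← F.val.map_comp, ← op_comp]
        exact congrArg F.val.map (congrArg Quiver.Hom.op (Subsingleton.elim _ _)) }
  map {F G} α :=
    { app := fun p => α.hom.app _
      naturality := fun p q h => α.hom.naturality _ }
  map_id F := rfl
  map_comp α β := rfl

lemma minOpen_subset {x : ↑X} {U : Set ↑X} (hU : IsOpen U) (hx : x ∈ U) : minOpen x ⊆ U :=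
  Set.sInter_subset_of_mem ⟨hU, hx⟩

lemma mem_minOpen_self (x : ↑X) : x ∈ minOpen x := mem_minOpen_iff.mpr le_rfl

lemma isBasis_Umin : Opens.IsBasis (Set.range (Umin X)) := by
  rw [Opens.isBasis_iff_nbhd]
  intro U x hx
  exact ⟨Umin X x, ⟨x, rfl⟩, mem_minOpen_self X x,
    fun z hz => minOpen_subset X U.isOpen hx hz⟩

/-- The index category of minimal open sets. -/
abbrev IndCat : Type := InducedCategory (Opens ↑X) (Umin X)

/-- The inclusion of the category of minimal opens into `Opens X`. -/
noncomputable abbrev GFun : IndCat X ⥤ Opens ↑X := inducedFunctor (Umin X)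

instance : TopologicalSpace (IndCat X) := inferInstanceAs (TopologicalSpace ↑X)

instance : (GFun X).IsCoverDense (Opens.grothendieckTopology X) :=
  TopCat.Opens.coverDense_inducedFunctor (isBasis_Umin X)

/-- The induced Grothendieck topology on the category of minimal opens. -/
noncomputable abbrev JTop : GrothendieckTopology (IndCat X) :=
  (GFun X).inducedTopology (Opens.grothendieckTopology X)

lemma indHom_ext {i j : IndCat X} (f g : i ⟶ j) : f = g :=
  (GFun X).map_injective (Subsingleton.elim _ _)

lemma covering_eq_top {p : IndCat X} {S : Sieve p} (hS : S ∈ JTop X p) : S = ⊤ := by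
  rw [← Sieve.id_mem_iff_eq_top]
  rw [Functor.mem_inducedTopology_iff_of_isCoverDense] at hS
  obtain ⟨V, f, ⟨q, g, h', hg, -⟩, hpV⟩ := hS p (mem_minOpen_self X p)
  have hq : p ∈ minOpen q := h'.le hpV
  have k : p ⟶ q := (GFun X).preimage (homOfLE (Umin_anti X (mem_minOpen_iff.mp hq)))
  have := S.downward_closed hg k
  rwa [indHom_ext X (k ≫ g) (𝟙 p)] at this

lemma isSheaf_JTop (P : (IndCat X)ᵒᵖ ⥤ AddCommGrpCat.{0}) :
    CategoryTheory.Presheaf.IsSheaf (JTop X) P := by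
  intro E p S hS
  obtain rfl : S = ⊤ := covering_eq_top X hS
  exact Presieve.isSheafFor_top_sieve _

lemma le_of_Umin_le {p q : ↑X} (h : Umin X q ≤ Umin X p) : pt p ≤ pt q :=
  mem_minOpen_iff.mp (h (mem_minOpen_self X q))

/-- The equivalence between the specialization preorder and the (opposite of the)
category of minimal opens. -/
noncomputable def specEquiv : Specialization ↑X ≌ (IndCat X)ᵒᵖ where
  functor :=
    { obj := fun p => Opposite.op (Specialization.ofEquiv p)
      map := fun {p q} f =>
        (show (Specialization.ofEquiv q : IndCat X) ⟶ Specialization.ofEquiv p from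
          InducedCategory.homMk (homOfLE (Umin_anti X (leOfHom f)))).op
      map_id := fun p => Quiver.Hom.unop_inj (indHom_ext X _ _)
      map_comp := fun f g => Quiver.Hom.unop_inj (indHom_ext X _ _) }
  inverse :=
    { obj := fun i => pt (show ↑X from i.unop)
      map := fun {i j} f => homOfLE (le_of_Umin_le X ((GFun X).map f.unop).le)
      map_id := fun i => Subsingleton.elim _ _
      map_comp := fun f g => Subsingleton.elim _ _ }
  unitIso := NatIso.ofComponents (fun p => Iso.refl _)
    (fun f => Subsingleton.elim _ _)
  counitIso := NatIso.ofComponents (fun i => Iso.refl _)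
    (fun f => Quiver.Hom.unop_inj (indHom_ext X _ _))
  functor_unitIso_comp := fun p => Quiver.Hom.unop_inj (indHom_ext X _ _)

instance : (sheafToPresheaf (JTop X) AddCommGrpCat.{0}).EssSurj :=
  ⟨fun P => ⟨⟨P, isSheaf_JTop X P⟩, ⟨Iso.refl _⟩⟩⟩

instance : (sheafToPresheaf (JTop X) AddCommGrpCat.{0}).IsEquivalence where

/-- The comparison functor, built from known equivalences. -/
noncomputable def compFunctor : TopCat.Sheaf AddCommGrpCat.{0} X ⥤ AbData ↑X :=
  (GFun X).sheafPushforwardContinuous AddCommGrpCat.{0} (JTop X) (Opens.grothendieckTopology X)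
    ⋙ sheafToPresheaf (JTop X) AddCommGrpCat.{0}
    ⋙ (Functor.whiskeringLeft _ _ _).obj (specEquiv X).functor

instance : ((GFun X).sheafPushforwardContinuous AddCommGrpCat.{0} (JTop X)
    (Opens.grothendieckTopology X)).IsEquivalence := by infer_instance

instance : (((Functor.whiskeringLeft (Specialization ↑X) (IndCat X)ᵒᵖ AddCommGrpCat.{0})).obj
    (specEquiv X).functor).IsEquivalence := by infer_instance

instance : (compFunctor X).IsEquivalence := by
  unfold compFunctor
  haveI h1 : ((GFun X).sheafPushforwardContinuous AddCommGrpCat.{0} (JTop X) (Opens.grothendieckTopology X)).IsEquivalence := inferInstance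
  exact @Functor.isEquivalence_trans _ _ _ _ _ _ _ _ h1 inferInstance

/-- The comparison functor agrees with `sheafToData`. -/
noncomputable def compIso : compFunctor X ≅ sheafToData X :=
  NatIso.ofComponents
    (fun F => NatIso.ofComponents (fun p => Iso.refl _)
      (fun {p q} f => by
        dsimp [compFunctor, sheafToData, specEquiv]
        exact (Category.comp_id _).trans (Category.id_comp _).symm))
    (fun {F F'} α => by
      ext p
      dsimp [compFunctor, sheafToData, specEquiv]
      rfl)

/-- For a finite topological space `X`, the assignment sending a sheaf of
abelian groups `F` on `X` to the abelian data `p ↦ F(U_p)` is an equivalence between the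
category of sheaves of abelian groups on `X` and the category of abelian data on `X`. -/
theorem statement0 : (sheafToData X).IsEquivalence :=
  Functor.isEquivalence_of_iso (compIso X)
end sheaves
end

section
/- Let f : X → Y be a continuous map between finite topological spaces. The following are equivalent: (1) f is universally closed, i.e. for every finite topological space Ȳ and continuous map g : Ȳ → Y, the projection Ȳ ×_Y X → Ȳ is a closed map, where Ȳ ×_Y X = {(ȳ,x) : g(ȳ) = f(x)} carries the subspace topology of the product; (2) f is a closed map; (3) for every x ∈ X, the restriction f|_{C_x} : C_x → C_{f(x)} is surjective. -/
/-- In a finite space, a map that is surjective on closures of points is a closed map. -/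
theorem closedmap_of_surjOn_closures {X Y : Type} [TopologicalSpace X] [TopologicalSpace Y]
    [Finite X] (f : X → Y)
    (h3 : ∀ x : X, Set.SurjOn f (closure {x}) (closure {f x})) : IsClosedMap f := by
  intro C hC
  have key : f '' C = ⋃ x ∈ C, closure {f x} := by
    ext y
    simp only [Set.mem_image, Set.mem_iUnion]
    constructor
    · rintro ⟨x, hx, rfl⟩
      exact ⟨x, hx, subset_closure rfl⟩
    · rintro ⟨x, hx, hy⟩
      obtain ⟨x', hx', rfl⟩ := h3 x hy
      exact ⟨x', hC.closure_subset_iff.2 (Set.singleton_subset_iff.2 hx) hx', rfl⟩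
  rw [key]
  exact Set.Finite.isClosed_biUnion C.toFinite fun x _ => isClosed_closure

/-- **Statement 6.** For a continuous map `f : X → Y` of finite topological spaces, the
following are equivalent: (1) `f` is universally closed; (2) `f` is closed; (3) for every
`x ∈ X`, the restriction `f|_{C_x} : C_x → C_{f(x)}` is surjective. -/
theorem statement6 {X Y : Type} [TopologicalSpace X] [TopologicalSpace Y] [Finite X] [Finite Y]
    (f : X → Y) (hf : Continuous f) :
    List.TFAE [
      -- (1) universally closed
      ∀ (Z : Type) [TopologicalSpace Z] [Finite Z] (g : Z → Y), Continuous g →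
        IsClosedMap (fun q : {q : Z × X // g q.1 = f q.2} => q.1.1),
      -- (2) closed
      IsClosedMap f,
      -- (3) surjective on closures of points
      ∀ x : X, Set.SurjOn f (closure {x}) (closure {f x})] := by
  tfae_have 1 → 2
  | h1 => by
    have hp := h1 Y id continuous_id
    intro C hC
    have key : f '' C = (fun q : {q : Y × X // id q.1 = f q.2} => q.1.1) ''
        ((fun q : {q : Y × X // id q.1 = f q.2} => q.1.2) ⁻¹' C) := by
      ext y
      constructor
      · rintro ⟨x, hx, rfl⟩
        exact ⟨⟨(f x, x), rfl⟩, hx, rfl⟩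
      · rintro ⟨⟨⟨y', x⟩, hq⟩, hx, rfl⟩
        exact ⟨x, hx, hq.symm⟩
    rw [key]
    exact hp _ (hC.preimage (continuous_snd.comp continuous_subtype_val))
  tfae_have 2 → 3
  | h2 => by
    intro x y hy
    have h : closure {f x} ⊆ f '' closure {x} :=
      closure_minimal (Set.singleton_subset_iff.2
        (Set.mem_image_of_mem f (subset_closure (Set.mem_singleton x))))
        (h2 _ isClosed_closure)
    exact h hy
  tfae_have 3 → 1
  | h3 => by
    intro Z _ _ g hg
    apply closedmap_of_surjOn_closures
    rintro ⟨⟨z, x⟩, hq⟩ z' hz'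
    have hz'' : g z' ∈ closure {f x} := by
      rw [← hq]
      exact ((specializes_iff_mem_closure.2 hz').map hg).mem_closure
    obtain ⟨x', hx', hfx'⟩ := h3 x hz''
    refine ⟨⟨(z', x'), hfx'.symm⟩, ?_, rfl⟩
    rw [closure_subtype]
    have : (Subtype.val '' ({⟨(z, x), hq⟩} : Set {q : Z × X // g q.1 = f q.2}))
        = {z} ×ˢ {x} := by simp [Set.singleton_prod_singleton]
    rw [this, closure_prod_eq]
    exact ⟨hz', hx'⟩
  tfae_finish
end
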